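/- T(1,1,1) = 2\zeta(3), i.e., \sum_{n=1}^\infty \sum_{m=1}^\infty 1/(n m (n+m)) = 2 \sum_{r=1}^\infty 1/r^3. -/

import Mathlib

open Filter Finset

noncomputable def Hh : ℕ → ℝ := fun k => ∑ j ∈ Finset.range k, (1:ℝ)/(j+1)

noncomputable def tt2 : ℕ × ℕ → ℝ :=
  fun p => 1/(((p.1:ℝ)+1) * ((p.2:ℝ)+1) * ((p.1:ℝ)+(p.2:ℝ)+2))

lemma tt2_nonneg (p : ℕ × ℕ) : 0 ≤ tt2 p := by
  unfold tt2; positivity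

lemma summable_b : Summable (fun n : ℕ => 1/(((n:ℝ)+1) * Real.sqrt ((n:ℝ)+1))) := by
  have h : Summable (fun n : ℕ => 1 / ((n:ℝ)) ^ ((3:ℝ)/2)) :=
    Real.summable_one_div_nat_rpow.mpr (by norm_num)
  have h2 : Summable (fun n : ℕ => 1 / (((n+1:ℕ):ℝ)) ^ ((3:ℝ)/2)) :=
    (summable_nat_add_iff (f := fun n : ℕ => 1 / ((n:ℝ)) ^ ((3:ℝ)/2)) 1).mpr h
  refine h2.congr fun n => ?_
  have hx : (0:ℝ) < (n:ℝ)+1 := by positivity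
  push_cast
  rw [show ((3:ℝ)/2) = 1 + 1/2 by norm_num, Real.rpow_add hx, Real.rpow_one,
    ← Real.sqrt_eq_rpow]

lemma sqrt_mul_le (n m : ℕ) :
    Real.sqrt ((n:ℝ)+1) * Real.sqrt ((m:ℝ)+1) ≤ (n:ℝ)+(m:ℝ)+2 := by
  have h := two_mul_le_add_sq (Real.sqrt ((n:ℝ)+1)) (Real.sqrt ((m:ℝ)+1))
  have h1 : Real.sqrt ((n:ℝ)+1) ^ 2 = (n:ℝ)+1 := Real.sq_sqrt (by positivity)
  have h2 : Real.sqrt ((m:ℝ)+1) ^ 2 = (m:ℝ)+1 := Real.sq_sqrt (by positivity)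
  nlinarith [Real.sqrt_nonneg ((n:ℝ)+1), Real.sqrt_nonneg ((m:ℝ)+1)]

lemma summable_tt2 : Summable tt2 := by
  refine Summable.of_nonneg_of_le tt2_nonneg (fun p => ?_)
    (summable_b.mul_of_nonneg summable_b (fun n => by positivity) (fun m => by positivity))
  obtain ⟨n, m⟩ := p
  simp only [tt2]
  rw [div_mul_div_comm, one_mul]
  apply one_div_le_one_div_of_le
  · positivity
  · have := sqrt_mul_le n m
    have hn : (0:ℝ) < (n:ℝ)+1 := by positivity
    have hm : (0:ℝ) < (m:ℝ)+1 := by positivity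
    calc ((n:ℝ)+1)*Real.sqrt ((n:ℝ)+1) * (((m:ℝ)+1)*Real.sqrt ((m:ℝ)+1))
        = ((n:ℝ)+1)*((m:ℝ)+1)*(Real.sqrt ((n:ℝ)+1)*Real.sqrt ((m:ℝ)+1)) := by ring
      _ ≤ ((n:ℝ)+1)*((m:ℝ)+1)*((n:ℝ)+(m:ℝ)+2) :=
          mul_le_mul_of_nonneg_left this (by positivity)

lemma Hh_add (a b : ℕ) : Hh (a + b) = Hh a + ∑ i ∈ Finset.range b, 1/((a:ℝ)+i+1) := by
  unfold Hh
  rw [Finset.sum_range_add]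
  congr 1
  refine Finset.sum_congr rfl fun i _ => ?_
  push_cast; ring_nf

lemma tele (m : ℕ) :
    HasSum (fun n : ℕ => 1/((n:ℝ)+1) - 1/((n:ℝ)+(m:ℝ)+2)) (Hh (m+1)) := by
  have hnn : ∀ n : ℕ, 0 ≤ 1/((n:ℝ)+1) - 1/((n:ℝ)+(m:ℝ)+2) := by
    intro n
    have : 1/((n:ℝ)+(m:ℝ)+2) ≤ 1/((n:ℝ)+1) := by
      apply one_div_le_one_div_of_le (by positivity); linarith [Nat.cast_nonneg (α := ℝ) m]
    linarith
  rw [hasSum_iff_tendsto_nat_of_nonneg hnn]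
  have key : ∀ N : ℕ, ∑ n ∈ Finset.range N, (1/((n:ℝ)+1) - 1/((n:ℝ)+(m:ℝ)+2))
      = Hh (m+1) - ∑ i ∈ Finset.range (m+1), 1/((N:ℝ)+i+1) := by
    intro N
    have h1 : ∑ n ∈ Finset.range N, (1/((n:ℝ)+1) - 1/((n:ℝ)+(m:ℝ)+2))
        = Hh N - ∑ n ∈ Finset.range N, 1/(((m+1:ℕ):ℝ)+n+1) := by
      rw [Finset.sum_sub_distrib]
      unfold Hh
      congr 1
      refine Finset.sum_congr rfl fun n _ => ?_
      push_cast; ring_nf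
    have h2 := Hh_add (m+1) N
    have h3 := Hh_add N (m+1)
    rw [h1]
    have : Hh (m+1+N) = Hh (N+(m+1)) := by rw [Nat.add_comm]
    linarith [h2, h3, this ▸ h2]
  simp only [key]
  have : Tendsto (fun N : ℕ => ∑ i ∈ Finset.range (m+1), 1/((N:ℝ)+i+1)) atTop (nhds 0) := by
    have h0 : (0:ℝ) = ∑ i ∈ Finset.range (m+1), (0:ℝ) := by simp
    rw [h0]
    apply tendsto_finset_sum
    intro i _
    have : Tendsto (fun N : ℕ => (N:ℝ)+i+1) atTop atTop := by
      apply tendsto_atTop_add_const_right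
      apply tendsto_atTop_add_const_right
      exact tendsto_natCast_atTop_atTop
    simpa [one_div, Pi.inv_def] using this.inv_tendsto_atTop
  simpa using (tendsto_const_nhds (x := Hh (m+1))).sub this

lemma inner_eval (m : ℕ) :
    ∑' n : ℕ, tt2 (n, m) = Hh (m+1) / ((m:ℝ)+1)^2 := by
  have hpt : ∀ n : ℕ, tt2 (n, m)
      = 1/((m:ℝ)+1)^2 * (1/((n:ℝ)+1) - 1/((n:ℝ)+(m:ℝ)+2)) := by
    intro n
    have hn : ((n:ℝ)+1) ≠ 0 := by positivity
    have hm : ((m:ℝ)+1) ≠ 0 := by positivity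
    have hnm : ((n:ℝ)+(m:ℝ)+2) ≠ 0 := by positivity
    simp only [tt2]
    field_simp
    ring
  calc ∑' n : ℕ, tt2 (n, m)
      = ∑' n : ℕ, 1/((m:ℝ)+1)^2 * (1/((n:ℝ)+1) - 1/((n:ℝ)+(m:ℝ)+2)) := by
        exact tsum_congr hpt
    _ = 1/((m:ℝ)+1)^2 * Hh (m+1) := by rw [tsum_mul_left, (tele m).tsum_eq]
    _ = Hh (m+1) / ((m:ℝ)+1)^2 := by ring

lemma Hh_nonneg (k : ℕ) : 0 ≤ Hh k := by
  unfold Hh; positivity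

lemma Hh_succ (k : ℕ) : Hh (k+1) = Hh k + 1/((k:ℝ)+1) := Finset.sum_range_succ _ k

lemma summable_Z : Summable (fun m : ℕ => 1/((m:ℝ)+1)^3) := by
  have h : Summable (fun n : ℕ => 1 / ((n:ℝ)) ^ (3:ℕ)) :=
    Real.summable_one_div_nat_pow.mpr (by norm_num)
  have h2 : Summable (fun n : ℕ => 1 / (((n+1:ℕ):ℝ)) ^ (3:ℕ)) :=
    (summable_nat_add_iff (f := fun n : ℕ => 1 / ((n:ℝ)) ^ (3:ℕ)) 1).mpr h
  exact h2.congr fun n => by push_cast; ring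

lemma summable_inner : Summable (fun m : ℕ => Hh (m+1) / ((m:ℝ)+1)^2) := by
  have h1 : Summable (fun p : ℕ × ℕ => tt2 (p.2, p.1)) := summable_tt2.prod_symm
  have h : Summable (fun m : ℕ => ∑' n : ℕ, tt2 (n, m)) := h1.prod
  exact h.congr fun m => inner_eval m

lemma summable_A : Summable (fun m : ℕ => Hh m / ((m:ℝ)+1)^2) := by
  refine Summable.of_nonneg_of_le (fun m => by have := Hh_nonneg m; positivity)
    (fun m => ?_) summable_inner
  have h1 : Hh m ≤ Hh (m+1) := by
    rw [Hh_succ]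
    have : (0:ℝ) ≤ 1/((m:ℝ)+1) := by positivity
    linarith
  gcongr

def diagEquiv : ℕ × ℕ ≃ Σ s : ℕ, Fin (s+1) where
  toFun p := ⟨p.1 + p.2, ⟨p.1, by omega⟩⟩
  invFun σ := (σ.2.1, σ.1 - σ.2.1)
  left_inv := by
    rintro ⟨n, m⟩
    simp
  right_inv := by
    rintro ⟨s, ⟨k, hk⟩⟩
    have h : k + (s - k) = s := by omega
    dsimp only
    refine Sigma.ext h ?_
    rw [Fin.heq_ext_iff (by simp [h])]

lemma finid (s : ℕ) :
    ∑ k ∈ Finset.range (s+1), tt2 (k, s - k) = 2 * Hh (s+1) / ((s:ℝ)+2)^2 := by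
  have hpt : ∀ k ∈ Finset.range (s+1), tt2 (k, s - k)
      = 1/((s:ℝ)+2)^2 * (1/((k:ℝ)+1) + 1/(((s - k : ℕ):ℝ)+1)) := by
    intro k hk
    rw [Finset.mem_range] at hk
    have hks : k ≤ s := by omega
    have hkr : (k:ℝ) ≤ (s:ℝ) := by exact_mod_cast hks
    have hc : ((s - k : ℕ):ℝ) = (s:ℝ) - (k:ℝ) := by
      push_cast [hks]; ring
    simp only [tt2]
    rw [hc]
    have h1 : ((k:ℝ)+1) ≠ 0 := by positivity
    have h2 : ((s:ℝ)-(k:ℝ)+1) ≠ 0 := by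
      have : (0:ℝ) < (s:ℝ)-(k:ℝ)+1 := by linarith
      exact this.ne'
    have h3 : ((s:ℝ)+2) ≠ 0 := by positivity
    have h4 : ((k:ℝ) + ((s:ℝ)-(k:ℝ)) + 2) = (s:ℝ)+2 := by ring
    rw [h4]
    field_simp
    ring
  rw [Finset.sum_congr rfl hpt, ← Finset.mul_sum, Finset.sum_add_distrib]
  have hr : ∑ k ∈ Finset.range (s+1), 1/(((s - k : ℕ):ℝ)+1) = Hh (s+1) := by
    have h := Finset.sum_range_reflect (fun j => 1/((j:ℝ)+1)) (s+1)
    unfold Hh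
    simpa using h
  have hl : ∑ k ∈ Finset.range (s+1), 1/((k:ℝ)+1) = Hh (s+1) := rfl
  rw [hr, hl]
  ring

lemma Tsigma : ∑' p : ℕ × ℕ, tt2 p = ∑' s : ℕ, 2 * Hh (s+1) / ((s:ℝ)+2)^2 := by
  have hsum : Summable (fun σ : Σ s : ℕ, Fin (s+1) => tt2 (diagEquiv.symm σ)) :=
    diagEquiv.symm.summable_iff.mpr summable_tt2
  calc ∑' p : ℕ × ℕ, tt2 p
      = ∑' σ : Σ s : ℕ, Fin (s+1), tt2 (diagEquiv.symm σ) :=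
        (diagEquiv.symm.tsum_eq tt2).symm
    _ = ∑' s : ℕ, ∑' k : Fin (s+1), tt2 (diagEquiv.symm ⟨s, k⟩) := hsum.tsum_sigma
    _ = ∑' s : ℕ, 2 * Hh (s+1) / ((s:ℝ)+2)^2 := by
        refine tsum_congr fun s => ?_
        rw [tsum_fintype]
        have he : ∀ k : Fin (s+1), tt2 (diagEquiv.symm ⟨s, k⟩) = tt2 (k.1, s - k.1) :=
          fun k => rfl
        rw [Finset.sum_congr rfl (fun k _ => he k),
          Fin.sum_univ_eq_sum_range (fun k => tt2 (k, s - k)) (s+1)]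
        exact finid s

lemma Tval : ∑' p : ℕ × ℕ, tt2 p
    = (∑' m : ℕ, Hh m/((m:ℝ)+1)^2) + ∑' m : ℕ, 1/((m:ℝ)+1)^3 := by
  have h1 : ∑' p : ℕ × ℕ, tt2 p = ∑' m : ℕ, ∑' n : ℕ, tt2 (n, m) := by
    rw [← (Equiv.prodComm ℕ ℕ).tsum_eq tt2]
    exact summable_tt2.prod_symm.tsum_prod
  rw [h1]
  have h2 : ∀ m : ℕ, ∑' n : ℕ, tt2 (n, m) = Hh m/((m:ℝ)+1)^2 + 1/((m:ℝ)+1)^3 := by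
    intro m
    rw [inner_eval m, Hh_succ]
    have hm : ((m:ℝ)+1) ≠ 0 := by positivity
    field_simp
  rw [tsum_congr h2, summable_A.tsum_add summable_Z]

lemma Aeq : ∑' s : ℕ, Hh (s+1) / ((s:ℝ)+2)^2 = ∑' m : ℕ, Hh m/((m:ℝ)+1)^2 := by
  symm
  rw [summable_A.tsum_eq_zero_add]
  have h0 : Hh 0 / (((0:ℕ):ℝ)+1)^2 = 0 := by simp [Hh]
  rw [h0, zero_add]
  refine tsum_congr fun s => ?_
  push_cast
  ring_nf

theorem tornheim_one_one_one :
    (∑' n : ℕ+, ∑' m : ℕ+,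
      1 / (((n : ℕ) : ℝ) * ((m : ℕ) : ℝ) * (((n : ℕ) + (m : ℕ) : ℕ) : ℝ)))
      = 2 * ∑' r : ℕ+, 1 / ((r : ℕ) : ℝ) ^ 3 := by
  have reidx : ∀ g : ℕ+ → ℝ, ∑' r : ℕ+, g r = ∑' n : ℕ, g (n.succPNat) := by
    intro g
    rw [← Equiv.pnatEquivNat.symm.tsum_eq g]
    rfl
  have hT : (∑' n : ℕ+, ∑' m : ℕ+,
      1 / (((n : ℕ) : ℝ) * ((m : ℕ) : ℝ) * (((n : ℕ) + (m : ℕ) : ℕ) : ℝ)))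
      = ∑' p : ℕ × ℕ, tt2 p := by
    rw [reidx]
    rw [summable_tt2.tsum_prod]
    refine tsum_congr fun n => ?_
    rw [reidx]
    refine tsum_congr fun m => ?_
    simp only [tt2, Nat.succPNat_coe]
    push_cast
    ring_nf
  have hZ : (∑' r : ℕ+, 1 / ((r : ℕ) : ℝ) ^ 3) = ∑' m : ℕ, 1/((m:ℝ)+1)^3 := by
    rw [reidx]
    refine tsum_congr fun m => ?_
    simp only [Nat.succPNat_coe]
    push_cast
    ring_nf
  have hsig : ∑' p : ℕ × ℕ, tt2 p = 2 * ∑' m : ℕ, Hh m/((m:ℝ)+1)^2 := by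
    rw [Tsigma, ← Aeq, ← tsum_mul_left]
    refine tsum_congr fun s => ?_
    ring
  have hAZ : (∑' m : ℕ, Hh m/((m:ℝ)+1)^2) = ∑' m : ℕ, 1/((m:ℝ)+1)^3 := by
    have := Tval
    rw [hsig] at this
    linarith
  rw [hT, hZ, Tval, hAZ]
  ring
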